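/- Let Ω ⊆ ℝ be an unbounded open set with finitely many connected components. If Ω is spectral, i.e., there exists a positive Radon measure μ on ℝ such that (Ω, μ) is a spectral pair, then Ω has no gaps between its component intervals: the complement ℝ∖Ω is a finite set (in particular, it has Lebesgue measure zero). -/

import Mathlib

open MeasureTheory

/-- The exponential `e_{-λ}(x) = e^{-2πi λ x}` used in the Fourier transform on `Ω ⊆ ℝ`. -/
noncomputable def negExp1 (lam x : ℝ) : ℂ :=
  Complex.exp ((((-2) * Real.pi * (lam * x) : ℝ) : ℂ) * Complex.I)

/-- `(Ω, μ)` is a spectral pair in dimension one. -/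
def IsSpectralPair1 (Ω : Set ℝ) (μ : Measure ℝ) : Prop :=
  (∀ f : ℝ → ℂ, Integrable f (volume.restrict Ω) →
      MemLp f 2 (volume.restrict Ω) →
      MemLp (fun lam => ∫ x in Ω, f x * negExp1 lam x) 2 μ ∧
      eLpNorm (fun lam => ∫ x in Ω, f x * negExp1 lam x) 2 μ
        = eLpNorm f 2 (volume.restrict Ω)) ∧
  Dense {g : Lp ℂ 2 μ | ∃ f : ℝ → ℂ,
      Integrable f (volume.restrict Ω) ∧ MemLp f 2 (volume.restrict Ω) ∧
      (g : ℝ → ℂ) =ᵐ[μ] fun lam => ∫ x in Ω, f x * negExp1 lam x}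

/-- The transform `g ↦ ĝ` (defined with respect to Lebesgue measure on all of `ℝ`). -/
noncomputable def xf (g : ℝ → ℂ) : ℝ → ℂ := fun lam => ∫ x, g x * negExp1 lam x

lemma negExp1_norm (lam x : ℝ) : ‖negExp1 lam x‖ = 1 := by
  unfold negExp1
  rw [Complex.norm_exp_ofReal_mul_I]

lemma negExp1_add (lam x c : ℝ) : negExp1 lam (x + c) = negExp1 lam x * negExp1 lam c := by
  unfold negExp1
  rw [← Complex.exp_add]
  congr 1
  push_cast
  ring

lemma continuous_negExp1_right (lam : ℝ) : Continuous (fun x => negExp1 lam x) := by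
  unfold negExp1; fun_prop

lemma continuous_negExp1_left (x : ℝ) : Continuous (fun lam => negExp1 lam x) := by
  unfold negExp1; fun_prop

lemma xf_integrand_integrable {g : ℝ → ℂ} (hg : Integrable g volume) (lam : ℝ) :
    Integrable (fun x => g x * negExp1 lam x) volume := by
  have h := hg.bdd_mul (continuous_negExp1_right lam).aestronglyMeasurable
    (Filter.Eventually.of_forall fun x => le_of_eq (negExp1_norm _ _))
  exact h.congr (Filter.Eventually.of_forall fun x => mul_comm _ _)

lemma continuous_xf {g : ℝ → ℂ} (hg : Integrable g volume) : Continuous (xf g) := by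
  apply continuous_of_dominated (bound := fun x => ‖g x‖)
  · intro lam; exact (xf_integrand_integrable hg lam).1
  · intro lam
    filter_upwards with x
    rw [norm_mul, negExp1_norm, mul_one]
  · exact hg.norm
  · filter_upwards with x
    exact continuous_const.mul (continuous_negExp1_left x)

lemma exists_long_interval (Ω : Set ℝ) (hunb : ¬ Bornology.IsBounded Ω)
    (hcomp : {C : Set ℝ | ∃ x ∈ Ω, connectedComponentIn Ω x = C}.Finite) (L : ℝ) :
    ∃ a : ℝ, Set.Icc a (a + L) ⊆ Ω := by
  have hne : Ω.Nonempty := by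
    rcases Set.eq_empty_or_nonempty Ω with h | h
    · exact absurd (h ▸ Bornology.isBounded_empty) hunb
    · exact h
  rcases le_or_gt L 0 with hL | hL
  · obtain ⟨x₀, hx₀⟩ := hne
    refine ⟨x₀, fun z hz => ?_⟩
    have : z = x₀ := le_antisymm (hz.2.trans (by linarith)) hz.1
    exact this ▸ hx₀
  · -- find an unbounded component
    have hsub : Ω ⊆ ⋃ C ∈ {C : Set ℝ | ∃ x ∈ Ω, connectedComponentIn Ω x = C}, C :=
      fun x hx => Set.mem_biUnion ⟨x, hx, rfl⟩ (mem_connectedComponentIn hx)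
    have hexists : ∃ C ∈ {C : Set ℝ | ∃ x ∈ Ω, connectedComponentIn Ω x = C},
        ¬ Bornology.IsBounded C := by
      by_contra h
      push_neg at h
      exact hunb (((Bornology.isBounded_biUnion hcomp).2 h).subset hsub)
    obtain ⟨C, ⟨x₀, hx₀, rfl⟩, hCunb⟩ := hexists
    have hpc : IsPreconnected (connectedComponentIn Ω x₀) := isPreconnected_connectedComponentIn
    have hoc : Set.OrdConnected (connectedComponentIn Ω x₀) := hpc.ordConnected
    have hx₀C : x₀ ∈ connectedComponentIn Ω x₀ := mem_connectedComponentIn hx₀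
    have hCsub : connectedComponentIn Ω x₀ ⊆ Ω := connectedComponentIn_subset _ _
    rw [isBounded_iff_bddBelow_bddAbove, not_and_or] at hCunb
    rcases hCunb with h | h
    · rw [not_bddBelow_iff] at h
      obtain ⟨y, hyC, hy⟩ := h (x₀ - L)
      refine ⟨x₀ - L, fun z hz => hCsub (hoc.out hyC hx₀C ⟨?_, ?_⟩)⟩
      · linarith [hz.1]
      · have := hz.2; linarith
    · rw [not_bddAbove_iff] at h
      obtain ⟨y, hyC, hy⟩ := h (x₀ + L)
      refine ⟨x₀, fun z hz => hCsub (hoc.out hx₀C hyC ⟨hz.1, ?_⟩)⟩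
      have := hz.2; linarith

lemma key_isometry {Ω : Set ℝ} (hmeas : MeasurableSet Ω) {μ : Measure ℝ}
    (hlong : ∀ L : ℝ, ∃ a, Set.Icc a (a + L) ⊆ Ω)
    (hsp : ∀ f : ℝ → ℂ, Integrable f (volume.restrict Ω) → MemLp f 2 (volume.restrict Ω) →
      MemLp (fun lam => ∫ x in Ω, f x * negExp1 lam x) 2 μ ∧
      eLpNorm (fun lam => ∫ x in Ω, f x * negExp1 lam x) 2 μ = eLpNorm f 2 (volume.restrict Ω))
    {g : ℝ → ℂ} (hg : Integrable g volume) (hg2 : MemLp g 2 volume)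
    {R : ℝ} (hR : ∀ x : ℝ, x ∉ Set.Icc (-R) R → g x = 0) :
    MemLp (xf g) 2 μ ∧ eLpNorm (xf g) 2 μ = eLpNorm g 2 volume := by
  -- we may assume R is replaced by |R|
  have hR' : ∀ x : ℝ, x ∉ Set.Icc (-|R|) |R| → g x = 0 := by
    intro x hx
    refine hR x fun hmem => hx ⟨?_, ?_⟩
    · calc -|R| ≤ -R := neg_le_neg (le_abs_self R)
        _ ≤ x := hmem.1
    · exact hmem.2.trans (le_abs_self R)
  set R' := |R| with hR'def
  have hR'0 : 0 ≤ R' := abs_nonneg R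
  obtain ⟨a, ha⟩ := hlong (2 * R')
  set c := a + R' with hc
  set gc : ℝ → ℂ := fun x => g (x - c) with hgc
  have hgc_supp : ∀ x : ℝ, x ∉ Ω → gc x = 0 := by
    intro x hx
    by_contra hne
    have hmem : x - c ∈ Set.Icc (-R') R' := by
      by_contra hmem
      exact hne (hR' _ hmem)
    apply hx
    apply ha
    have hceq : c = a + R' := hc
    constructor
    · have h1 := hmem.1; linarith
    · have h2 := hmem.2; linarith
  have hgc_int : Integrable gc volume := hg.comp_sub_right c
  have hmp : MeasurePreserving (fun x : ℝ => x - c) volume volume :=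
    measurePreserving_sub_right volume c
  have hgc_eLp : eLpNorm gc 2 volume = eLpNorm g 2 volume :=
    eLpNorm_comp_measurePreserving hg2.1 hmp
  have hgc_mem : MemLp gc 2 volume := ⟨hgc_int.1, by rw [hgc_eLp]; exact hg2.2⟩
  obtain ⟨hmem, hnorm⟩ := hsp gc hgc_int.restrict (hgc_mem.restrict Ω)
  -- pointwise identity
  have hpt : ∀ lam : ℝ, (∫ x in Ω, gc x * negExp1 lam x) = xf g lam * negExp1 lam c := by
    intro lam
    rw [setIntegral_eq_integral_of_forall_compl_eq_zero
      (fun x hx => by rw [hgc_supp x hx, zero_mul])]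
    have h1 : (fun x => gc x * negExp1 lam x)
        = fun x => (fun y => g y * negExp1 lam (y + c)) (x - c) := by
      funext x
      simp only [hgc, sub_add_cancel]
    rw [h1, integral_sub_right_eq_self (fun y => g y * negExp1 lam (y + c)) c]
    have h2 : (fun y => g y * negExp1 lam (y + c))
        = fun y => (g y * negExp1 lam y) * negExp1 lam c := by
      funext y
      rw [negExp1_add, mul_assoc]
    rw [h2, integral_mul_const]
    rfl
  have hnormeq : ∀ lam : ℝ, ‖(∫ x in Ω, gc x * negExp1 lam x)‖ = ‖xf g lam‖ := by
    intro lam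
    rw [hpt lam, norm_mul, negExp1_norm, mul_one]
  have hcongr : eLpNorm (fun lam => ∫ x in Ω, gc x * negExp1 lam x) 2 μ
      = eLpNorm (xf g) 2 μ :=
    eLpNorm_congr_norm_ae (Filter.Eventually.of_forall hnormeq)
  have hindic : Ω.indicator gc = gc := by
    funext x
    by_cases hx : x ∈ Ω
    · exact Set.indicator_of_mem hx _
    · rw [Set.indicator_of_notMem hx, hgc_supp x hx]
  have hrestrict : eLpNorm gc 2 (volume.restrict Ω) = eLpNorm g 2 volume := by
    rw [← eLpNorm_indicator_eq_eLpNorm_restrict hmeas, hindic, hgc_eLp]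
  constructor
  · exact ⟨(continuous_xf hg).aestronglyMeasurable, by
      rw [← hcongr, hnorm, hrestrict]
      exact hg2.2⟩
  · rw [← hcongr, hnorm, hrestrict]

lemma truncation {F : ℝ → ℂ} (hF : MemLp F 2 volume) {ε : ENNReal} (hε : 0 < ε) :
    ∃ m : ℕ, eLpNorm (fun x => F x - (Set.Icc (-(m:ℝ)) (m:ℝ)).indicator F x) 2 volume < ε := by
  -- replace ε by min ε 1
  set ε' : ENNReal := min ε 1 with hε'def
  have hε'0 : 0 < ε' := lt_min hε one_pos
  have hε'top : ε' ≠ ⊤ := ne_top_of_le_ne_top (by norm_num) (min_le_right _ _)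
  suffices h : ∃ m : ℕ,
      eLpNorm (fun x => F x - (Set.Icc (-(m:ℝ)) (m:ℝ)).indicator F x) 2 volume < ε' by
    obtain ⟨m, hm⟩ := h
    exact ⟨m, hm.trans_le (min_le_left _ _)⟩
  set F' := hF.1.mk F with hF'def
  have hFF' : F =ᵐ[volume] F' := hF.1.ae_eq_mk
  have hF'sm : StronglyMeasurable F' := hF.1.stronglyMeasurable_mk
  set D : ℝ → ENNReal := fun x => (‖F' x‖₊ : ENNReal) ^ (2:ℕ) with hD
  have hDeq : ∀ x, D x = (‖F' x‖₊ : ENNReal) ^ (2:ℝ) := fun x => by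
    show (‖F' x‖₊ : ENNReal) ^ (2:ℕ) = _
    rw [← ENNReal.rpow_natCast]
    norm_num
  have hDmeas : Measurable D := by
    have : Measurable fun x => (‖F' x‖₊ : ENNReal) :=
      hF'sm.measurable.nnnorm.coe_nnreal_ennreal
    exact this.pow_const 2
  set ν : Measure ℝ := volume.withDensity D with hν
  have hνfin : ν Set.univ ≠ ⊤ := by
    have h2 := hF.2
    rw [eLpNorm_congr_ae hFF'] at h2
    rw [eLpNorm_eq_lintegral_rpow_enorm_toReal (by norm_num) (by norm_num)] at h2
    simp only [ENNReal.toReal_ofNat, enorm_eq_nnnorm] at h2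
    have hlt : (∫⁻ x, (‖F' x‖₊ : ENNReal) ^ (2:ℝ) ∂volume) ≠ ⊤ := by
      intro htop
      rw [htop] at h2
      simp [ENNReal.top_rpow_of_pos (by norm_num : (0:ℝ) < 1/2)] at h2
    rw [hν, withDensity_apply D MeasurableSet.univ, Measure.restrict_univ]
    simpa only [hDeq] using hlt
  set s : ℕ → Set ℝ := fun m => (Set.Icc (-(m:ℝ)) (m:ℝ))ᶜ with hs
  have hsm : ∀ m, MeasurableSet (s m) := fun m => measurableSet_Icc.compl
  have hanti : Antitone s := by
    intro i j hij
    apply Set.compl_subset_compl.2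
    apply Set.Icc_subset_Icc
    · exact neg_le_neg (by exact_mod_cast hij)
    · exact_mod_cast hij
  have hiInter : ⋂ m, s m = ∅ := by
    ext x
    simp only [Set.mem_iInter, Set.mem_empty_iff_false, iff_false, not_forall, not_not]
    obtain ⟨m, hm⟩ := exists_nat_ge |x|
    exact ⟨m, by simp only [hs, Set.mem_compl_iff, not_not]; constructor <;>
      [linarith [neg_abs_le x]; linarith [le_abs_self x]]⟩
  have htend : Filter.Tendsto (ν ∘ s) Filter.atTop (nhds 0) := by
    have := tendsto_measure_iInter_atTop (μ := ν)
      (fun m => (hsm m).nullMeasurableSet) hanti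
      ⟨0, ne_top_of_le_ne_top hνfin (measure_mono (Set.subset_univ _))⟩
    rwa [hiInter, measure_empty] at this
  set δ : ENNReal := ε' ^ (2:ℝ) with hδ
  have hδ0 : 0 < δ := ENNReal.rpow_pos hε'0 hε'top
  obtain ⟨m, hm⟩ := (htend.eventually_lt_const hδ0).exists
  refine ⟨m, ?_⟩
  have hfun : (fun x => F x - (Set.Icc (-(m:ℝ)) (m:ℝ)).indicator F x) = (s m).indicator F := by
    funext x
    by_cases hx : x ∈ Set.Icc (-(m:ℝ)) (m:ℝ)
    · rw [Set.indicator_of_mem hx, Set.indicator_of_notMem (by simp [hs, hx]), sub_self]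
    · rw [Set.indicator_of_notMem hx, Set.indicator_of_mem (by simp [hs, hx]), sub_zero]
  rw [hfun, eLpNorm_indicator_eq_eLpNorm_restrict (hsm m),
    eLpNorm_congr_ae (ae_restrict_of_ae hFF'),
    eLpNorm_eq_lintegral_rpow_enorm_toReal (by norm_num) (by norm_num)]
  simp only [ENNReal.toReal_ofNat, enorm_eq_nnnorm]
  have hνsm : ν (s m) = ∫⁻ x in s m, (‖F' x‖₊ : ENNReal) ^ (2:ℝ) ∂volume := by
    rw [hν, withDensity_apply D (hsm m)]
    exact lintegral_congr fun x => hDeq x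
  rw [← hνsm]
  calc (ν (s m)) ^ (1/(2:ℝ)) < δ ^ (1/(2:ℝ)) :=
        ENNReal.rpow_lt_rpow hm (by norm_num)
    _ = ε' := by
        rw [hδ, ← ENNReal.rpow_mul]
        norm_num

lemma compl_null {Ω : Set ℝ} (hΩ : IsOpen Ω) {μ : Measure ℝ}
    (hlong : ∀ L : ℝ, ∃ a, Set.Icc a (a + L) ⊆ Ω)
    (hsp : IsSpectralPair1 Ω μ) : volume Ωᶜ = 0 := by
  have hmeas : MeasurableSet Ω := hΩ.measurableSet
  by_contra hpos
  have hcover : Ωᶜ = ⋃ n : ℕ, (Ωᶜ ∩ Set.Icc (-(n:ℝ)) (n:ℝ)) := by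
    ext x
    simp only [Set.mem_iUnion, Set.mem_inter_iff, Set.mem_compl_iff, Set.mem_Icc]
    constructor
    · intro hx
      obtain ⟨n, hn⟩ := exists_nat_ge |x|
      exact ⟨n, hx, by linarith [neg_abs_le x], by linarith [le_abs_self x]⟩
    · rintro ⟨n, hn, -⟩; exact hn
  obtain ⟨n, hKne⟩ : ∃ n : ℕ, volume (Ωᶜ ∩ Set.Icc (-(n:ℝ)) (n:ℝ)) ≠ 0 := by
    by_contra h
    push_neg at h
    exact hpos (by rw [hcover]; exact measure_iUnion_null h)
  set K : Set ℝ := Ωᶜ ∩ Set.Icc (-(n:ℝ)) (n:ℝ) with hKdef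
  have hKm : MeasurableSet K := hmeas.compl.inter measurableSet_Icc
  have hKfin : volume K ≠ ⊤ :=
    ne_top_of_le_ne_top measure_Icc_lt_top.ne (measure_mono Set.inter_subset_right)
  set h1 : ℝ → ℂ := K.indicator (fun _ => (1:ℂ)) with hh1def
  have hh_int : Integrable h1 volume := by
    rw [hh1def, integrable_indicator_iff hKm]
    exact integrableOn_const hKfin
  set δ : ENNReal := eLpNorm h1 2 volume with hδdef
  have hh_elp : δ = volume K ^ (1/(2:ℝ)) := by
    rw [hδdef, hh1def, eLpNorm_indicator_const hKm (by norm_num) (by norm_num)]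
    simp
  have hh_mem : MemLp h1 2 volume := by
    refine ⟨hh_int.1, ?_⟩
    show δ < ⊤
    rw [hh_elp]
    exact ENNReal.rpow_lt_top_of_nonneg (by norm_num) hKfin
  have hδ0 : δ ≠ 0 := by
    rw [hh_elp]
    exact (ENNReal.rpow_pos (pos_iff_ne_zero.2 hKne) hKfin).ne'
  have hδtop : δ ≠ ⊤ := hh_mem.2.ne
  have hδ20 : δ / 2 ≠ 0 := by
    simp only [ne_eq, ENNReal.div_eq_zero_iff, hδ0, false_or]
    exact ENNReal.ofNat_ne_top
  have hδ2top : δ / 2 ≠ ⊤ := (ENNReal.div_lt_top hδtop (by norm_num)).ne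
  have hsupp : ∀ x : ℝ, x ∉ Set.Icc (-(n:ℝ)) (n:ℝ) → h1 x = 0 := fun x hx =>
    Set.indicator_of_notMem (fun hxK => hx hxK.2) _
  obtain ⟨hHmem, hHnorm⟩ := key_isometry hmeas hlong hsp.1 hh_int hh_mem hsupp
  -- THE CLAIM
  have claim : ∀ f : ℝ → ℂ, Integrable f (volume.restrict Ω) → MemLp f 2 (volume.restrict Ω) →
      δ / 2 ≤ eLpNorm (fun lam => (∫ x in Ω, f x * negExp1 lam x) - xf h1 lam) 2 μ := by
    intro f hf_int hf_mem
    set F : ℝ → ℂ := Ω.indicator f with hF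
    have hFint : Integrable F volume := (integrable_indicator_iff hmeas).2 hf_int
    have hFmem : MemLp F 2 volume :=
      ⟨(aestronglyMeasurable_indicator_iff hmeas).2 hf_mem.1, by
        rw [hF, eLpNorm_indicator_eq_eLpNorm_restrict hmeas]; exact hf_mem.2⟩
    have hΦeq : ∀ lam : ℝ, (∫ x in Ω, f x * negExp1 lam x) = xf F lam := by
      intro lam
      rw [show (∫ x in Ω, f x * negExp1 lam x) = ∫ x in Ω, F x * negExp1 lam x from
        setIntegral_congr_fun hmeas (fun x hx => by rw [hF, Set.indicator_of_mem hx])]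
      exact setIntegral_eq_integral_of_forall_compl_eq_zero
        (fun x hx => by rw [hF, Set.indicator_of_notMem hx, zero_mul])
    obtain ⟨m, hmlt⟩ := truncation hFmem (pos_iff_ne_zero.2 hδ20)
    set Fm : ℝ → ℂ := (Set.Icc (-(m:ℝ)) (m:ℝ)).indicator F with hFm
    have hFm_int : Integrable Fm volume :=
      (integrable_indicator_iff measurableSet_Icc).2 hFint.integrableOn
    have hFm_mem : MemLp Fm 2 volume := hFmem.indicator measurableSet_Icc
    set G : ℝ → ℂ := fun x => Fm x - h1 x with hG
    have hG_int : Integrable G volume := hFm_int.sub hh_int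
    have hG_mem : MemLp G 2 volume := hFm_mem.sub hh_mem
    set R : ℝ := max (m:ℝ) (n:ℝ) with hRdef
    have hG_supp : ∀ x : ℝ, x ∉ Set.Icc (-R) R → G x = 0 := by
      intro x hx
      have hxm : x ∉ Set.Icc (-(m:ℝ)) (m:ℝ) := fun h =>
        hx ⟨le_trans (neg_le_neg (le_max_left _ _)) h.1, h.2.trans (le_max_left _ _)⟩
      have hxn : x ∉ Set.Icc (-(n:ℝ)) (n:ℝ) := fun h =>
        hx ⟨le_trans (neg_le_neg (le_max_right _ _)) h.1, h.2.trans (le_max_right _ _)⟩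
      rw [hG]
      simp only
      rw [hFm, Set.indicator_of_notMem hxm, hsupp x hxn, sub_zero]
    obtain ⟨hGmem, hGnorm⟩ := key_isometry hmeas hlong hsp.1 hG_int hG_mem hG_supp
    have hpoint : ∀ x : ℝ, ‖h1 x‖ ≤ ‖G x‖ := by
      intro x
      by_cases hx : x ∈ K
      · have hF0 : F x = 0 := Set.indicator_of_notMem hx.1 f
        have hFm0 : Fm x = 0 := by
          rw [hFm]
          by_cases h : x ∈ Set.Icc (-(m:ℝ)) (m:ℝ)
          · rw [Set.indicator_of_mem h, hF0]
          · exact Set.indicator_of_notMem h _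
        have : G x = -h1 x := by rw [hG]; simp only; rw [hFm0, zero_sub]
        rw [this, norm_neg]
      · rw [hh1def, Set.indicator_of_notMem hx, norm_zero]
        exact norm_nonneg _
    have hGge : δ ≤ eLpNorm G 2 volume := hδdef ▸ eLpNorm_mono hpoint
    have hxfG : ∀ lam : ℝ, xf G lam = xf Fm lam - xf h1 lam := by
      intro lam
      show (∫ x, G x * negExp1 lam x) = (∫ x, Fm x * negExp1 lam x) - ∫ x, h1 x * negExp1 lam x
      rw [← integral_sub (xf_integrand_integrable hFm_int lam) (xf_integrand_integrable hh_int lam)]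
      congr 1
      funext x
      rw [hG]
      simp only
      rw [sub_mul]
    set Fd : ℝ → ℂ := fun x => F x - Fm x with hFd
    have hFd_int : Integrable Fd volume := hFint.sub hFm_int
    have hFd_supp : ∀ x : ℝ, x ∉ Ω → Fd x = 0 := by
      intro x hx
      have hF0 : F x = 0 := Set.indicator_of_notMem hx f
      have hFm0 : Fm x = 0 := by
        rw [hFm]
        by_cases h : x ∈ Set.Icc (-(m:ℝ)) (m:ℝ)
        · rw [Set.indicator_of_mem h, hF0]
        · exact Set.indicator_of_notMem h _
      rw [hFd]; simp only; rw [hF0, hFm0, sub_zero]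
    have hFd_mem : MemLp Fd 2 volume := hFmem.sub hFm_mem
    obtain ⟨-, hBnorm⟩ := hsp.1 Fd hFd_int.restrict (hFd_mem.restrict Ω)
    have hBeq : ∀ lam : ℝ, (∫ x in Ω, Fd x * negExp1 lam x) = xf F lam - xf Fm lam := by
      intro lam
      rw [setIntegral_eq_integral_of_forall_compl_eq_zero
        (fun x hx => by rw [hFd_supp x hx, zero_mul])]
      show (∫ x, Fd x * negExp1 lam x) = (∫ x, F x * negExp1 lam x) - ∫ x, Fm x * negExp1 lam x
      rw [← integral_sub (xf_integrand_integrable hFint lam) (xf_integrand_integrable hFm_int lam)]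
      congr 1
      funext x
      rw [hFd]; simp only; rw [sub_mul]
    have hBsmall : eLpNorm (fun lam => xf F lam - xf Fm lam) 2 μ < δ / 2 := by
      have hcongr : eLpNorm (fun lam => xf F lam - xf Fm lam) 2 μ
          = eLpNorm (fun lam => ∫ x in Ω, Fd x * negExp1 lam x) 2 μ :=
        eLpNorm_congr_ae (Filter.Eventually.of_forall fun lam => (hBeq lam).symm)
      rw [hcongr, hBnorm]
      calc eLpNorm Fd 2 (volume.restrict Ω) ≤ eLpNorm Fd 2 volume :=
            eLpNorm_mono_measure _ Measure.restrict_le_self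
        _ < δ / 2 := hmlt
    have htri : δ ≤ eLpNorm (fun lam => xf F lam - xf h1 lam) 2 μ + δ / 2 := by
      have h0 : δ ≤ eLpNorm (xf G) 2 μ := by rw [hGnorm]; exact hGge
      have h1' : eLpNorm (xf G) 2 μ
          = eLpNorm (fun lam => (xf F lam - xf h1 lam) - (xf F lam - xf Fm lam)) 2 μ :=
        eLpNorm_congr_ae (Filter.Eventually.of_forall fun lam => by rw [hxfG lam]; ring)
      have h2' : eLpNorm (fun lam => (xf F lam - xf h1 lam) - (xf F lam - xf Fm lam)) 2 μ
          ≤ eLpNorm (fun lam => xf F lam - xf h1 lam) 2 μ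
            + eLpNorm (fun lam => xf F lam - xf Fm lam) 2 μ := by
        have ha : AEStronglyMeasurable (fun lam => xf F lam - xf h1 lam) μ :=
          ((continuous_xf hFint).sub (continuous_xf hh_int)).aestronglyMeasurable
        have hb : AEStronglyMeasurable (fun lam => xf F lam - xf Fm lam) μ :=
          ((continuous_xf hFint).sub (continuous_xf hFm_int)).aestronglyMeasurable
        exact eLpNorm_sub_le ha hb one_le_two
      calc δ ≤ eLpNorm (xf G) 2 μ := h0
        _ = _ := h1'
        _ ≤ _ := h2'
        _ ≤ eLpNorm (fun lam => xf F lam - xf h1 lam) 2 μ + δ / 2 :=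
            add_le_add_right hBsmall.le _
    have hmain : δ / 2 ≤ eLpNorm (fun lam => xf F lam - xf h1 lam) 2 μ := by
      have h2 : δ / 2 + δ / 2 ≤ eLpNorm (fun lam => xf F lam - xf h1 lam) 2 μ + δ / 2 := by
        rw [ENNReal.add_halves]; exact htri
      exact (ENNReal.add_le_add_iff_right hδ2top).1 h2
    calc δ / 2 ≤ eLpNorm (fun lam => xf F lam - xf h1 lam) 2 μ := hmain
      _ = eLpNorm (fun lam => (∫ x in Ω, f x * negExp1 lam x) - xf h1 lam) 2 μ :=
          eLpNorm_congr_ae (Filter.Eventually.of_forall fun lam => by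
            show xf F lam - xf h1 lam = (∫ x in Ω, f x * negExp1 lam x) - xf h1 lam
            rw [hΦeq lam])
  -- use density
  set HH : Lp ℂ 2 μ := hHmem.toLp _ with hHHdef
  have hδ2pos : 0 < (δ / 2).toReal := ENNReal.toReal_pos hδ20 hδ2top
  obtain ⟨g, hgS, hdist⟩ := Metric.mem_closure_iff.1 (hsp.2 HH) _ hδ2pos
  obtain ⟨f, hf_int, hf_mem, hgae⟩ := hgS
  have hlow := claim f hf_int hf_mem
  have hcoe : (⇑(HH - g) : ℝ → ℂ)
      =ᵐ[μ] fun lam => xf h1 lam - (∫ x in Ω, f x * negExp1 lam x) := by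
    filter_upwards [Lp.coeFn_sub HH g, hHmem.coeFn_toLp, hgae] with lam ha hb hc
    rw [ha, Pi.sub_apply, hb, hc]
  have hdisteq : dist HH g
      = (eLpNorm (fun lam => xf h1 lam - (∫ x in Ω, f x * negExp1 lam x)) 2 μ).toReal := by
    rw [Lp.dist_def]
    congr 1
    apply eLpNorm_congr_ae
    filter_upwards [hHmem.coeFn_toLp, hgae] with lam hb hc
    rw [Pi.sub_apply, hb, hc]
  have hflip : eLpNorm (fun lam => xf h1 lam - (∫ x in Ω, f x * negExp1 lam x)) 2 μ
      = eLpNorm (fun lam => (∫ x in Ω, f x * negExp1 lam x) - xf h1 lam) 2 μ := by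
    apply eLpNorm_congr_norm_ae
    filter_upwards with lam
    exact norm_sub_rev _ _
  have hfin : eLpNorm (fun lam => xf h1 lam - (∫ x in Ω, f x * negExp1 lam x)) 2 μ ≠ ⊤ := by
    rw [← eLpNorm_congr_ae hcoe]
    exact (Lp.eLpNorm_lt_top _).ne
  have : (δ / 2).toReal ≤ dist HH g := by
    rw [hdisteq]
    apply ENNReal.toReal_le_toReal hδ2top hfin |>.2
    rw [hflip]
    exact hlow
  linarith [hdist]

lemma finite_of_null {Ω : Set ℝ}
    (hcomp : {C : Set ℝ | ∃ x ∈ Ω, connectedComponentIn Ω x = C}.Finite)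
    (hnull : volume Ωᶜ = 0) : Ωᶜ.Finite := by
  haveI : Finite ↥{C : Set ℝ | ∃ x ∈ Ω, connectedComponentIn Ω x = C} := hcomp.to_subtype
  have key : ∀ y ∈ Ωᶜ, ∃ C ∈ {C : Set ℝ | ∃ x ∈ Ω, connectedComponentIn Ω x = C},
      sInf C = y := by
    intro y hy
    rw [Set.mem_compl_iff] at hy
    have hx : ∀ m : ℕ, ∃ x, x ∈ Ω ∧ x ∈ Set.Ioo y (y + 1/((m:ℝ)+1)) := by
      intro m
      by_contra h
      push_neg at h
      have hsub : Set.Ioo y (y + 1/((m:ℝ)+1)) ⊆ Ωᶜ := fun x hxI hxΩ => h x hxΩ hxI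
      have h0 := measure_mono_null hsub hnull
      rw [Real.volume_Ioo] at h0
      rw [ENNReal.ofReal_eq_zero] at h0
      have hpos : (0:ℝ) < 1/((m:ℝ)+1) := by positivity
      linarith
    choose x hxΩ hxI using hx
    set φ : ℕ → ↥{C : Set ℝ | ∃ x ∈ Ω, connectedComponentIn Ω x = C} :=
      fun m => ⟨connectedComponentIn Ω (x m), ⟨x m, hxΩ m, rfl⟩⟩ with hφ
    obtain ⟨C, hCinf⟩ := Finite.exists_infinite_fiber φ
    have hA : (φ ⁻¹' {C}).Infinite := Set.infinite_coe_iff.1 hCinf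
    obtain ⟨n₀, hn₀⟩ := hA.nonempty
    have hCeq : connectedComponentIn Ω (x n₀) = C.1 := congrArg Subtype.val hn₀
    set D := connectedComponentIn Ω (x n₀) with hD
    have hDpre : IsPreconnected D := isPreconnected_connectedComponentIn
    have hDoc := hDpre.ordConnected
    have hDsub : D ⊆ Ω := connectedComponentIn_subset _ _
    have hxn₀D : x n₀ ∈ D := mem_connectedComponentIn (hxΩ n₀)
    have hlb : ∀ z ∈ D, y < z := by
      intro z hz
      rcases lt_trichotomy y z with h | h | h
      · exact h
      · exact absurd (hDsub hz) (h ▸ hy)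
      · exfalso
        have hmem : y ∈ Set.Icc z (x n₀) := ⟨h.le, (hxI n₀).1.le⟩
        exact hy (hDsub (hDoc.out hz hxn₀D hmem))
    have happ : ∀ ε : ℝ, 0 < ε → ∃ w ∈ D, w < y + ε := by
      intro ε hε
      obtain ⟨m, hmA, hm⟩ := hA.exists_gt ⌈1/ε⌉₊
      have hφm : connectedComponentIn Ω (x m) = C.1 := congrArg Subtype.val hmA
      have hxmD : x m ∈ D := by
        have : x m ∈ connectedComponentIn Ω (x m) := mem_connectedComponentIn (hxΩ m)
        rw [hφm] at this
        show x m ∈ D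
        rw [hCeq]
        exact this
      refine ⟨x m, hxmD, ?_⟩
      have h2 := (hxI m).2
      have hceil : (1/ε : ℝ) < (m:ℝ) + 1 := by
        calc (1/ε : ℝ) ≤ (⌈1/ε⌉₊ : ℝ) := Nat.le_ceil _
          _ < (m:ℝ) + 1 := by
            have : (⌈1/ε⌉₊ : ℝ) < (m:ℝ) := by exact_mod_cast hm
            linarith
      have hlt : 1/((m:ℝ)+1) < ε := by
        rw [div_lt_iff₀ (by positivity)]
        have := (div_lt_iff₀ hε).1 hceil
        linarith
      linarith
    have hbdd : BddBelow D := ⟨y, fun z hz => (hlb z hz).le⟩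
    have hne : D.Nonempty := ⟨x n₀, hxn₀D⟩
    have hsinf : sInf D = y := by
      apply le_antisymm
      · by_contra hcon
        push_neg at hcon
        obtain ⟨w, hwD, hw⟩ := happ (sInf D - y) (by linarith)
        have := csInf_le hbdd hwD
        linarith
      · exact le_csInf hne fun z hz => (hlb z hz).le
    exact ⟨C.1, C.2, by rw [← hCeq]; exact hsinf⟩
  have himg : Ωᶜ ⊆ (fun C => sInf C) '' {C : Set ℝ | ∃ x ∈ Ω, connectedComponentIn Ω x = C} := by
    intro y hy
    obtain ⟨C, hC, h⟩ := key y hy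
    exact ⟨C, hC, h⟩
  exact Set.Finite.subset (hcomp.image _) himg

/-- An unbounded open set `Ω ⊆ ℝ` with finitely many connected components
which is spectral has no gaps: its complement is a finite set. -/
theorem statement9 (Ω : Set ℝ) (hΩ : IsOpen Ω)
    (hunb : ¬ Bornology.IsBounded Ω)
    (hcomp : {C : Set ℝ | ∃ x ∈ Ω, connectedComponentIn Ω x = C}.Finite)
    (hspec : ∃ μ : Measure ℝ, μ.Regular ∧ IsSpectralPair1 Ω μ) :
    Ωᶜ.Finite := by
  obtain ⟨μ, -, hsp⟩ := hspec
  have hlong := exists_long_interval Ω hunb hcomp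
  exact finite_of_null hcomp (compl_null hΩ hlong hsp)
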